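/- Let L be a bounded linear order. If p : L^n → L is a lattice polynomial function with w(A) = p(e_A^{a,b}), then p(t) = ⋁_{A: w(A)=b} ⋀_{i∈A} t_i = ⋀_{A: w*(A)=b} ⋁_{i∈A} t_i, where w*(A) = b iff w([n]\A) = a (duality between disjunctive and conjunctive normal forms). -/
import Mathlib


/-- Lattice polynomial functions: the smallest class of functions `L^n → L` containing the
coordinate projections and closed under pointwise binary min and max. -/
inductive IsLatticePolynomial {L : Type*} [LinearOrder L] {n : ℕ} :
    ((Fin n → L) → L) → Prop
  | proj (k : Fin n) : IsLatticePolynomial (fun t => t k)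
  | inf {p q : (Fin n → L) → L} : IsLatticePolynomial p → IsLatticePolynomial q →
      IsLatticePolynomial (fun t => p t ⊓ q t)
  | sup {p q : (Fin n → L) → L} : IsLatticePolynomial p → IsLatticePolynomial q →
      IsLatticePolynomial (fun t => p t ⊔ q t)

private lemma ILP.mono {L : Type*} [LinearOrder L] {n : ℕ} {p : (Fin n → L) → L}
    (hp : IsLatticePolynomial p) : Monotone p := by
  induction hp with
  | proj k => exact fun x y h => h k
  | inf _ _ ihp ihq => exact fun x y h => inf_le_inf (ihp h) (ihq h)
  | sup _ _ ihp ihq => exact fun x y h => sup_le_sup (ihp h) (ihq h)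

private lemma sup_eq_top' {L : Type*} [LinearOrder L] [OrderTop L] {x y : L} :
    x ⊔ y = ⊤ ↔ x = ⊤ ∨ y = ⊤ := by
  constructor
  · intro h
    rcases le_total x y with hxy | hxy
    · right; rwa [sup_eq_right.mpr hxy] at h
    · left; rwa [sup_eq_left.mpr hxy] at h
  · rintro (h | h) <;> simp [h]

private lemma inf_eq_bot' {L : Type*} [LinearOrder L] [OrderBot L] {x y : L} :
    x ⊓ y = ⊥ ↔ x = ⊥ ∨ y = ⊥ := by
  constructor
  · intro h
    rcases le_total x y with hxy | hxy
    · left; rwa [inf_eq_left.mpr hxy] at h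
    · right; rwa [inf_eq_right.mpr hxy] at h
  · rintro (h | h) <;> simp [h]

private lemma ILP.dnf {L : Type*} [LinearOrder L] [BoundedOrder L] {n : ℕ}
    {p : (Fin n → L) → L} (hp : IsLatticePolynomial p) (t : Fin n → L) :
    p t = (Finset.univ.filter fun A : Finset (Fin n) =>
        p (fun i => if i ∈ A then (⊤ : L) else ⊥) = ⊤).sup (fun A => A.inf t) := by
  induction hp with
  | proj k =>
    apply le_antisymm
    · exact Finset.le_sup_of_le (b := {k}) (by simp) (by simp)
    · apply Finset.sup_le
      intro A hA
      simp only [Finset.mem_filter, Finset.mem_univ, true_and] at hA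
      by_cases hk : k ∈ A
      · exact Finset.inf_le hk
      · rw [if_neg hk] at hA
        exact le_top.trans (hA.ge.trans bot_le)
  | @inf q r hq hr ihq ihr =>
    beta_reduce
    rw [ihq, ihr]
    apply le_antisymm
    · rw [Finset.sup_inf_distrib_right]
      apply Finset.sup_le
      intro A hA
      rw [Finset.sup_inf_distrib_left]
      apply Finset.sup_le
      intro B hB
      simp only [Finset.mem_filter, Finset.mem_univ, true_and] at hA hB
      rw [← Finset.inf_union]
      refine Finset.le_sup (f := fun A : Finset (Fin n) => A.inf t) (Finset.mem_filter.mpr ⟨Finset.mem_univ _, ?_⟩)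
      have hleA : (fun i => if i ∈ A then (⊤ : L) else ⊥) ≤
          (fun i => if i ∈ A ∪ B then (⊤ : L) else ⊥) := by
        intro i; by_cases h : i ∈ A <;> simp [h]
      have hleB : (fun i => if i ∈ B then (⊤ : L) else ⊥) ≤
          (fun i => if i ∈ A ∪ B then (⊤ : L) else ⊥) := by
        intro i; by_cases h : i ∈ B <;> simp [h]
      rw [inf_eq_top_iff]
      exact ⟨top_le_iff.mp (hA.ge.trans (ILP.mono hq hleA)),
        top_le_iff.mp (hB.ge.trans (ILP.mono hr hleB))⟩
    · apply Finset.sup_le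
      intro A hA
      simp only [Finset.mem_filter, Finset.mem_univ, true_and, inf_eq_top_iff] at hA
      exact le_inf
        (Finset.le_sup (f := fun A : Finset (Fin n) => A.inf t)
          (Finset.mem_filter.mpr ⟨Finset.mem_univ _, hA.1⟩))
        (Finset.le_sup (f := fun A : Finset (Fin n) => A.inf t)
          (Finset.mem_filter.mpr ⟨Finset.mem_univ _, hA.2⟩))
  | @sup q r hq hr ihq ihr =>
    beta_reduce
    have hfilt : (Finset.univ.filter fun A : Finset (Fin n) =>
        q (fun i => if i ∈ A then (⊤ : L) else ⊥) ⊔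
          r (fun i => if i ∈ A then (⊤ : L) else ⊥) = ⊤) =
        (Finset.univ.filter fun A : Finset (Fin n) =>
          q (fun i => if i ∈ A then (⊤ : L) else ⊥) = ⊤) ∪
        (Finset.univ.filter fun A : Finset (Fin n) =>
          r (fun i => if i ∈ A then (⊤ : L) else ⊥) = ⊤) := by
      ext A
      simp only [Finset.mem_filter, Finset.mem_univ, true_and, Finset.mem_union, sup_eq_top']
    rw [hfilt, Finset.sup_union, ← ihq, ← ihr]

private lemma ILP.cnf {L : Type*} [LinearOrder L] [BoundedOrder L] {n : ℕ}
    {p : (Fin n → L) → L} (hp : IsLatticePolynomial p) (t : Fin n → L) :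
    p t = (Finset.univ.filter fun A : Finset (Fin n) =>
        p (fun i => if i ∈ Aᶜ then (⊤ : L) else ⊥) = ⊥).inf (fun A => A.sup t) := by
  induction hp with
  | proj k =>
    apply le_antisymm
    · apply Finset.le_inf
      intro A hA
      simp only [Finset.mem_filter, Finset.mem_univ, true_and] at hA
      by_cases hk : k ∈ A
      · exact Finset.le_sup hk
      · rw [if_pos (Finset.mem_compl.mpr hk)] at hA
        exact le_top.trans (hA.le.trans bot_le)
    · exact Finset.inf_le_of_le (b := {k}) (by simp) (by simp)
  | @inf q r hq hr ihq ihr =>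
    beta_reduce
    have hfilt : (Finset.univ.filter fun A : Finset (Fin n) =>
        q (fun i => if i ∈ Aᶜ then (⊤ : L) else ⊥) ⊓
          r (fun i => if i ∈ Aᶜ then (⊤ : L) else ⊥) = ⊥) =
        (Finset.univ.filter fun A : Finset (Fin n) =>
          q (fun i => if i ∈ Aᶜ then (⊤ : L) else ⊥) = ⊥) ∪
        (Finset.univ.filter fun A : Finset (Fin n) =>
          r (fun i => if i ∈ Aᶜ then (⊤ : L) else ⊥) = ⊥) := by
      ext A
      simp only [Finset.mem_filter, Finset.mem_univ, true_and, Finset.mem_union, inf_eq_bot']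
    rw [hfilt, Finset.inf_union, ← ihq, ← ihr]
  | @sup q r hq hr ihq ihr =>
    beta_reduce
    rw [ihq, ihr]
    apply le_antisymm
    · apply Finset.le_inf
      intro A hA
      simp only [Finset.mem_filter, Finset.mem_univ, true_and, sup_eq_bot_iff] at hA
      exact sup_le
        (Finset.inf_le (f := fun A : Finset (Fin n) => A.sup t)
          (Finset.mem_filter.mpr ⟨Finset.mem_univ _, hA.1⟩))
        (Finset.inf_le (f := fun A : Finset (Fin n) => A.sup t)
          (Finset.mem_filter.mpr ⟨Finset.mem_univ _, hA.2⟩))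
    · rw [Finset.inf_sup_distrib_right]
      apply Finset.le_inf
      intro A hA
      rw [Finset.inf_sup_distrib_left]
      apply Finset.le_inf
      intro B hB
      simp only [Finset.mem_filter, Finset.mem_univ, true_and] at hA hB
      rw [← Finset.sup_union]
      refine Finset.inf_le (f := fun A : Finset (Fin n) => A.sup t) (Finset.mem_filter.mpr ⟨Finset.mem_univ _, ?_⟩)
      have hsubA : (A ∪ B)ᶜ ⊆ Aᶜ := Finset.compl_subset_compl.mpr Finset.subset_union_left
      have hsubB : (A ∪ B)ᶜ ⊆ Bᶜ := Finset.compl_subset_compl.mpr Finset.subset_union_right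
      have hleA : (fun i => if i ∈ (A ∪ B)ᶜ then (⊤ : L) else ⊥) ≤
          (fun i => if i ∈ Aᶜ then (⊤ : L) else ⊥) := by
        intro i
        show (if i ∈ (A ∪ B)ᶜ then (⊤ : L) else ⊥) ≤ (if i ∈ Aᶜ then (⊤ : L) else ⊥)
        by_cases h : i ∈ (A ∪ B)ᶜ
        · rw [if_pos h, if_pos (hsubA h)]
        · rw [if_neg h]; exact bot_le
      have hleB : (fun i => if i ∈ (A ∪ B)ᶜ then (⊤ : L) else ⊥) ≤
          (fun i => if i ∈ Bᶜ then (⊤ : L) else ⊥) := by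
        intro i
        show (if i ∈ (A ∪ B)ᶜ then (⊤ : L) else ⊥) ≤ (if i ∈ Bᶜ then (⊤ : L) else ⊥)
        by_cases h : i ∈ (A ∪ B)ᶜ
        · rw [if_pos h, if_pos (hsubB h)]
        · rw [if_neg h]; exact bot_le
      rw [sup_eq_bot_iff]
      exact ⟨le_bot_iff.mp ((ILP.mono hq hleA).trans hA.le),
        le_bot_iff.mp ((ILP.mono hr hleB).trans hB.le)⟩

/-- Disjunctive and conjunctive normal forms, with `w(A) = p(e_A^{⊥,⊤})` and the dual
`w*(A) = ⊤` iff `w([n]\A) = ⊥`. -/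
theorem latticePolynomial_dnf_cnf {L : Type*} [LinearOrder L] [BoundedOrder L]
    {n : ℕ} (p : (Fin n → L) → L) (hp : IsLatticePolynomial p) (t : Fin n → L) :
    p t = (Finset.univ.filter fun A : Finset (Fin n) =>
        p (fun i => if i ∈ A then (⊤ : L) else ⊥) = ⊤).sup (fun A => A.inf t) ∧
    p t = (Finset.univ.filter fun A : Finset (Fin n) =>
        p (fun i => if i ∈ Aᶜ then (⊤ : L) else ⊥) = ⊥).inf (fun A => A.sup t) := by
  exact ⟨ILP.dnf hp t, ILP.cnf hp t⟩
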